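/- (Campanato-type iteration, Step 3 of the proof of Theorem 1.1.) Let n ≥ 1, β ∈ (0,1), r ∈ (0,1), C₀ > 0, and let u : B₁ → ℝ. Suppose there are affine functions l_k(x) = a_k + ⟨b_k, x⟩ (a_k ∈ ℝ, b_k ∈ ℝⁿ, k ∈ ℕ) such that for every k ≥ 1: sup_{x ∈ B_{r^k}} |u(x) − l_k(x)| ≤ r^{k(1+β)} and |b_{k+1} − b_k| ≤ C₀·r^{kβ}. Then the sequence (b_k) converges to some b ∈ ℝⁿ, u is differentiable at 0 with derivative b, and there exists a constant C depending only on C₀, r and β such that |u(x) − u(0) − ⟨b, x⟩| ≤ C·|x|^{1+β} for all x ∈ B_r. -/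

import Mathlib

open Metric Set Filter
open scoped Matrix RealInnerProductSpace

noncomputable section

abbrev En (n : ℕ) : Type := EuclideanSpace ℝ (Fin n)

/-- Uniform (λ,Λ)-ellipticity: `λ·tr N ≤ F M − F (M+N) ≤ Λ·tr N` for all symmetric `M`
and positive semidefinite `N`. -/
def UniformlyElliptic {n : ℕ} (lam Lam : ℝ) (F : Matrix (Fin n) (Fin n) ℝ → ℝ) : Prop :=
  ∀ M N : Matrix (Fin n) (Fin n) ℝ, M.IsHermitian → N.PosSemidef →
    lam * N.trace ≤ F M - F (M + N) ∧ F M - F (M + N) ≤ Lam * N.trace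

/-- The Hessian matrix of `φ` at `x`. -/
def hessMatrix {n : ℕ} (φ : En n → ℝ) (x : En n) : Matrix (Fin n) (Fin n) ℝ :=
  fun i j => iteratedFDeriv ℝ 2 φ x ![EuclideanSpace.single i 1, EuclideanSpace.single j 1]

/-- `u` is a viscosity solution of `Φ(x,|ξ+Du|)F(D²u) = f(x)` in `B₁`. -/
def IsViscositySol {n : ℕ} (Φ : En n → ℝ → ℝ) (F : Matrix (Fin n) (Fin n) ℝ → ℝ)
    (f : En n → ℝ) (ξ : En n) (u : En n → ℝ) : Prop :=
  ∀ φ : En n → ℝ, ContDiffOn ℝ 2 φ (ball (0 : En n) 1) →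
    ∀ x₀ ∈ ball (0 : En n) 1, gradient φ x₀ ≠ 0 →
      (IsLocalMinOn (fun x => u x - φ x) (ball (0 : En n) 1) x₀ →
        f x₀ ≤ Φ x₀ ‖ξ + gradient φ x₀‖ * F (hessMatrix φ x₀)) ∧
      (IsLocalMaxOn (fun x => u x - φ x) (ball (0 : En n) 1) x₀ →
        Φ x₀ ‖ξ + gradient φ x₀‖ * F (hessMatrix φ x₀) ≤ f x₀)

/-- Condition (A2) on the structure function `Φ`. -/
structure CondA2 {n : ℕ} (Φ : En n → ℝ → ℝ) (iΦ sΦ L ν₀ ν₁ : ℝ) : Prop where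
  cont : ContinuousOn (fun p : En n × ℝ => Φ p.1 p.2) (ball (0 : En n) 1 ×ˢ Ici (0:ℝ))
  nonneg : ∀ x ∈ ball (0 : En n) 1, ∀ t : ℝ, 0 ≤ t → 0 ≤ Φ x t
  i_le_s : iΦ ≤ sΦ
  neg_one_lt_i : (-1 : ℝ) < iΦ
  one_le_L : 1 ≤ L
  nu0_pos : 0 < ν₀
  nu0_le_nu1 : ν₀ ≤ ν₁
  almost_mono : ∀ x ∈ ball (0 : En n) 1, ∀ s t : ℝ, 0 < s → s ≤ t →
    Φ x s / s ^ iΦ ≤ L * (Φ x t / t ^ iΦ)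
  almost_anti : ∀ x ∈ ball (0 : En n) 1, ∀ s t : ℝ, 0 < s → s ≤ t →
    Φ x t / t ^ sΦ ≤ L * (Φ x s / s ^ sΦ)
  phi_one : ∀ x ∈ ball (0 : En n) 1, ν₀ ≤ Φ x 1 ∧ Φ x 1 ≤ ν₁

/-- Viscosity solution of the homogeneous equation `F(D²h) = 0` in `B₁`. -/
def IsViscositySolHomog {n : ℕ} (F : Matrix (Fin n) (Fin n) ℝ → ℝ) (h : En n → ℝ) : Prop :=
  ∀ φ : En n → ℝ, ContDiffOn ℝ 2 φ (ball (0 : En n) 1) →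
    ∀ x₀ ∈ ball (0 : En n) 1,
      (IsLocalMinOn (fun x => h x - φ x) (ball (0 : En n) 1) x₀ → 0 ≤ F (hessMatrix φ x₀)) ∧
      (IsLocalMaxOn (fun x => h x - φ x) (ball (0 : En n) 1) x₀ → F (hessMatrix φ x₀) ≤ 0)

/-- `alphaBar` is a Krylov–Safonov exponent for `F`, with constant `cKS`. -/
def KrylovSafonovExp {n : ℕ} (F : Matrix (Fin n) (Fin n) ℝ → ℝ) (alphaBar cKS : ℝ) : Prop :=
  0 < cKS ∧
  ∀ h : En n → ℝ, ContinuousOn h (ball (0 : En n) 1) → IsViscositySolHomog F h →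
    ∀ Ch : ℝ, (∀ x ∈ ball (0 : En n) 1, |h x| ≤ Ch) →
      (∀ x ∈ ball (0 : En n) (1/2), DifferentiableAt ℝ h x) ∧
      (∀ x ∈ ball (0 : En n) (1/2), |h x| + ‖gradient h x‖ ≤ cKS * Ch) ∧
      (∀ x ∈ ball (0 : En n) (1/2), ∀ y ∈ ball (0 : En n) (1/2),
        ‖gradient h x - gradient h y‖ ≤ cKS * Ch * ‖x - y‖ ^ alphaBar)

/-- Campanato-type iteration (Step 3 of the proof of Theorem 1.1): if `u` is approximated at
every scale `r^k` by affine functions `l_k(x) = a_k + ⟨b_k, x⟩` with errors `r^{k(1+β)}` and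
`|b_{k+1} − b_k| ≤ C₀ r^{kβ}`, then the slopes converge to some `b`, `u` is differentiable at `0`
with gradient `b`, and `|u(x) − u(0) − ⟨b,x⟩| ≤ C|x|^{1+β}` on `B_r`. -/
theorem campanato_iteration {n : ℕ} (hn : 1 ≤ n) (β r C₀ : ℝ)
    (hβ : β ∈ Ioo (0:ℝ) 1) (hr : r ∈ Ioo (0:ℝ) 1) (hC₀ : 0 < C₀) :
    ∃ C : ℝ, 0 < C ∧
      ∀ (u : En n → ℝ) (a : ℕ → ℝ) (b : ℕ → En n),
        (∀ k : ℕ, 1 ≤ k → ∀ x ∈ ball (0 : En n) (r ^ k),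
          |u x - (a k + ⟪b k, x⟫)| ≤ r ^ ((k : ℝ) * (1 + β))) →
        (∀ k : ℕ, 1 ≤ k → ‖b (k + 1) - b k‖ ≤ C₀ * r ^ ((k : ℝ) * β)) →
        ∃ blim : En n,
          Tendsto b atTop (nhds blim) ∧
          HasGradientAt u blim 0 ∧
          (∀ x ∈ ball (0 : En n) r, |u x - u 0 - ⟪blim, x⟫| ≤ C * ‖x‖ ^ (1 + β)) := by
  obtain ⟨hr0, hr1⟩ := hr
  obtain ⟨hβ0, hβ1⟩ := hβ
  have hρ0 : (0:ℝ) < r ^ β := Real.rpow_pos_of_pos hr0 β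
  have hρ1 : r ^ β < 1 := Real.rpow_lt_one hr0.le hr1 hβ0
  have hconvβ : ∀ k : ℕ, r ^ ((k : ℝ) * β) = (r ^ β) ^ k := by
    intro k
    rw [mul_comm, Real.rpow_mul hr0.le, Real.rpow_natCast]
  have hconv1β : ∀ k : ℕ, r ^ ((k : ℝ) * (1 + β)) = ((r ^ k : ℝ)) ^ (1 + β) := by
    intro k
    rw [Real.rpow_mul hr0.le, Real.rpow_natCast]
  set D : ℝ := C₀ / (1 - r ^ β) with hD
  have hDpos : 0 < D := div_pos hC₀ (by linarith)
  have hr1β : (0:ℝ) < r ^ (1 + β) := Real.rpow_pos_of_pos hr0 _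
  refine ⟨2 / r ^ (1 + β) + D / r ^ β, by positivity, ?_⟩
  intro u a b hu hb
  -- Cauchy sequence
  have hb' : ∀ k : ℕ, dist (b (k + 1)) (b (k + 2)) ≤ (C₀ * r ^ β) * (r ^ β) ^ k := by
    intro k
    have := hb (k + 1) (by omega)
    rw [hconvβ] at this
    rw [dist_eq_norm, norm_sub_rev]
    calc ‖b (k + 2) - b (k + 1)‖ ≤ C₀ * (r ^ β) ^ (k + 1) := this
      _ = (C₀ * r ^ β) * (r ^ β) ^ k := by ring
  obtain ⟨blim, htend'⟩ := cauchySeq_tendsto_of_complete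
    (cauchySeq_of_le_geometric (r ^ β) (C₀ * r ^ β) hρ1 hb')
  have htend : Tendsto b atTop (nhds blim) := by
    have := (tendsto_add_atTop_iff_nat 1).mp htend'
    exact this
  have hdist : ∀ k : ℕ, 1 ≤ k → ‖b k - blim‖ ≤ D * (r ^ β) ^ k := by
    intro k hk
    obtain ⟨m, rfl⟩ := Nat.exists_eq_add_of_le hk
    have := dist_le_of_le_geometric_of_tendsto (r ^ β) (C₀ * r ^ β) hρ1 hb' htend' m
    rw [dist_eq_norm] at this
    calc ‖b (1 + m) - blim‖ = ‖b (m + 1) - blim‖ := by rw [add_comm]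
      _ ≤ C₀ * r ^ β * (r ^ β) ^ m / (1 - r ^ β) := this
      _ = D * (r ^ β) ^ (1 + m) := by rw [hD]; ring
  -- key pointwise bound
  have key : ∀ x ∈ ball (0 : EuclideanSpace ℝ (Fin n)) r,
      |u x - u 0 - ⟪blim, x⟫| ≤ (2 / r ^ (1 + β) + D / r ^ β) * ‖x‖ ^ (1 + β) := by
    intro x hx
    rw [mem_ball_zero_iff] at hx
    rcases eq_or_ne x 0 with rfl | hx0
    · simp [Real.zero_rpow (by linarith : (1:ℝ) + β ≠ 0)]
    have hxn : 0 < ‖x‖ := norm_pos_iff.mpr hx0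
    -- find scale k
    have hex : ∃ m : ℕ, r ^ m ≤ ‖x‖ := by
      obtain ⟨m, hm⟩ := exists_pow_lt_of_lt_one hxn hr1
      exact ⟨m, hm.le⟩
    classical
    set m := Nat.find hex with hm
    have hmle : r ^ m ≤ ‖x‖ := Nat.find_spec hex
    have hm2 : 2 ≤ m := by
      by_contra h
      interval_cases m
      · simp at hmle; linarith
      · simp at hmle; linarith
    set k := m - 1 with hkdef
    have hk1 : 1 ≤ k := by omega
    have hkm : m = k + 1 := by omega
    have hxlt : ‖x‖ < r ^ k := by
      have := Nat.find_min hex (show k < m by omega)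
      linarith [not_le.mp this]
    have hxge : r ^ (k + 1) ≤ ‖x‖ := by rw [← hkm]; exact hmle
    have hrk0 : (0:ℝ) < r ^ k := pow_pos hr0 k
    -- the three pieces
    have hA : |u x - (a k + ⟪b k, x⟫)| ≤ (r ^ k : ℝ) ^ (1 + β) := by
      have := hu k hk1 x (mem_ball_zero_iff.mpr hxlt)
      rwa [hconv1β] at this
    have hB : |u 0 - a k| ≤ (r ^ k : ℝ) ^ (1 + β) := by
      have := hu k hk1 0 (mem_ball_zero_iff.mpr (by simpa using hrk0))
      rw [hconv1β] at this
      simpa using this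
    have hC : |⟪b k - blim, x⟫| ≤ D * (r ^ β) ^ k * ‖x‖ := by
      calc |⟪b k - blim, x⟫| ≤ ‖b k - blim‖ * ‖x‖ := abs_real_inner_le_norm _ _
        _ ≤ D * (r ^ β) ^ k * ‖x‖ :=
          mul_le_mul_of_nonneg_right (hdist k hk1) (norm_nonneg x)
    -- scale comparisons
    have hrk_le : (r ^ k : ℝ) ≤ ‖x‖ / r := by
      rw [le_div_iff₀ hr0]
      calc (r ^ k) * r = r ^ (k + 1) := by ring
        _ ≤ ‖x‖ := hxge
    have h1β : (r ^ k : ℝ) ^ (1 + β) ≤ ‖x‖ ^ (1 + β) / r ^ (1 + β) := by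
      calc (r ^ k : ℝ) ^ (1 + β) ≤ (‖x‖ / r) ^ (1 + β) :=
            Real.rpow_le_rpow (pow_nonneg hr0.le k) hrk_le (by linarith)
        _ = ‖x‖ ^ (1 + β) / r ^ (1 + β) := Real.div_rpow (norm_nonneg x) hr0.le _
    have hββ : ((r ^ β) ^ k : ℝ) * ‖x‖ ≤ ‖x‖ ^ (1 + β) / r ^ β := by
      have e1 : ((r ^ β) ^ k : ℝ) = ((r ^ k : ℝ)) ^ β := by
        rw [← Real.rpow_natCast (r ^ β) k, ← Real.rpow_mul hr0.le,
          mul_comm, Real.rpow_mul hr0.le, Real.rpow_natCast]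
      have e2 : ((r ^ k : ℝ)) ^ β ≤ (‖x‖ / r) ^ β :=
        Real.rpow_le_rpow (pow_nonneg hr0.le k) hrk_le hβ0.le
      have e3 : (‖x‖ / r) ^ β = ‖x‖ ^ β / r ^ β := Real.div_rpow (norm_nonneg x) hr0.le _
      have e4 : ‖x‖ ^ β * ‖x‖ = ‖x‖ ^ (1 + β) := by
        rw [add_comm, Real.rpow_add hxn, Real.rpow_one]
      calc ((r ^ β) ^ k : ℝ) * ‖x‖ ≤ (‖x‖ ^ β / r ^ β) * ‖x‖ := by
            rw [e1]; rw [e3] at e2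
            exact mul_le_mul_of_nonneg_right e2 hxn.le
        _ = ‖x‖ ^ (1 + β) / r ^ β := by rw [div_mul_eq_mul_div, e4]
    have hsplit : u x - u 0 - ⟪blim, x⟫
        = (u x - (a k + ⟪b k, x⟫)) - (u 0 - a k) + ⟪b k - blim, x⟫ := by
      rw [inner_sub_left]; ring
    calc |u x - u 0 - ⟪blim, x⟫|
        ≤ |u x - (a k + ⟪b k, x⟫)| + |u 0 - a k| + |⟪b k - blim, x⟫| := by
          rw [hsplit]
          exact (abs_add_le _ _).trans (add_le_add_left (abs_sub _ _) _)
      _ ≤ (r ^ k : ℝ) ^ (1 + β) + (r ^ k : ℝ) ^ (1 + β) + D * (r ^ β) ^ k * ‖x‖ := by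
          gcongr
      _ ≤ ‖x‖ ^ (1 + β) / r ^ (1 + β) + ‖x‖ ^ (1 + β) / r ^ (1 + β)
            + D * (‖x‖ ^ (1 + β) / r ^ β) := by
          have h3 : D * (r ^ β) ^ k * ‖x‖ ≤ D * (‖x‖ ^ (1 + β) / r ^ β) := by
            rw [mul_assoc]; exact mul_le_mul_of_nonneg_left hββ hDpos.le
          exact add_le_add (add_le_add h1β h1β) h3
      _ = (2 / r ^ (1 + β) + D / r ^ β) * ‖x‖ ^ (1 + β) := by ring
  refine ⟨blim, htend, ?_, fun x hx => key x hx⟩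
  -- differentiability at 0
  rw [hasGradientAt_iff_isLittleO]
  rw [Asymptotics.isLittleO_iff]
  intro ε hε
  set Cc : ℝ := 2 / r ^ (1 + β) + D / r ^ β with hCc
  have hCcpos : 0 < Cc := by positivity
  have hδ : 0 < min r ((ε / Cc) ^ (1/β)) :=
    lt_min hr0 (Real.rpow_pos_of_pos (div_pos hε hCcpos) _)
  rw [Metric.eventually_nhds_iff]
  refine ⟨min r ((ε / Cc) ^ (1/β)), hδ, ?_⟩
  intro x hxd
  rw [dist_zero_right] at hxd
  have hx1 : ‖x‖ < r := lt_of_lt_of_le hxd (min_le_left _ _)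
  have hx2 : ‖x‖ ≤ (ε / Cc) ^ (1/β) := (lt_of_lt_of_le hxd (min_le_right _ _)).le
  have hk := key x (mem_ball_zero_iff.mpr hx1)
  have e0 : ‖x‖ ^ (1 + β) = ‖x‖ ^ β * ‖x‖ := by
    rw [add_comm, Real.rpow_add' (norm_nonneg x) (by linarith), Real.rpow_one]
  have hxβ : ‖x‖ ^ β ≤ ε / Cc := by
    calc ‖x‖ ^ β ≤ ((ε / Cc) ^ (1/β)) ^ β :=
          Real.rpow_le_rpow (norm_nonneg x) hx2 hβ0.le
      _ = ε / Cc := by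
          rw [← Real.rpow_mul (le_of_lt (div_pos hε hCcpos)),
            one_div, inv_mul_cancel₀ (ne_of_gt hβ0), Real.rpow_one]
  have : Cc * ‖x‖ ^ β ≤ ε := by
    rw [← le_div_iff₀' hCcpos]; exact hxβ
  calc ‖u x - u 0 - ⟪blim, x - 0⟫‖ = |u x - u 0 - ⟪blim, x⟫| := by rw [sub_zero]; rfl
    _ ≤ Cc * ‖x‖ ^ (1 + β) := hk
    _ = (Cc * ‖x‖ ^ β) * ‖x‖ := by rw [e0]; ring
    _ ≤ ε * ‖x‖ := mul_le_mul_of_nonneg_right this (norm_nonneg x)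
    _ = ε * ‖x - 0‖ := by rw [sub_zero]
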